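/- In the diagonal-crossing cell configuration, the ratio of the graph lower-bound cost to the true diagonal cost within one cell equals (k−1)/k: if a trajectory crosses a w×w cell diagonally from corner to opposite corner (cost √2·w/V_max), the cheapest corresponding graph edge connects the first sub-segment on one side to the last sub-segment on a perpendicular side, with cost √2·(k−1)·w/(k·V_max). -/

import Mathlib

/-- Diagonal-crossing cell configuration. In the cell [0,w]² with each side
divided into k sub-segments, the entering sub-segment A = [0, w/k]×{0} (containing the
corner (0,0)) and the exiting sub-segment B = {w}×[(k−1)w/k, w] (containing the opposite
corner (w,w)) are at minimum distance √2·w·(k−1)/k; hence the graph edge cost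
(min distance / V_max) relates to the true diagonal cost √2·w/V_max by the ratio (k−1)/k. -/
theorem diagonal_crossing_ratio
    (w Vmax : ℝ) (hw : 0 < w) (hV : 0 < Vmax) (k : ℕ) (hk : 1 ≤ k)
    (A B : Set (EuclideanSpace ℝ (Fin 2)))
    (hA : A = {x | x 1 = 0 ∧ x 0 ∈ Set.Icc 0 (w / k)})
    (hB : B = {x | x 0 = w ∧ x 1 ∈ Set.Icc (((k : ℝ) - 1) * w / k) w}) :
    sInf {d : ℝ | ∃ x ∈ A, ∃ y ∈ B, d = ‖x - y‖} =
      Real.sqrt 2 * (((k : ℝ) - 1) * w / k) ∧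
    (sInf {d : ℝ | ∃ x ∈ A, ∃ y ∈ B, d = ‖x - y‖} / Vmax) /
      (Real.sqrt 2 * w / Vmax) = ((k : ℝ) - 1) / k := by
  have hk1 : (1 : ℝ) ≤ (k : ℝ) := by exact_mod_cast hk
  have hkpos : (0 : ℝ) < (k : ℝ) := lt_of_lt_of_le one_pos hk1
  set c : ℝ := ((k : ℝ) - 1) * w / k with hc
  have hc0 : 0 ≤ c := by
    apply div_nonneg _ hkpos.le
    exact mul_nonneg (by linarith) hw.le
  have hcw : w - w / k = c := by
    rw [hc, eq_div_iff hkpos.ne', sub_mul, div_mul_cancel₀ _ hkpos.ne']; ring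
  -- witness points
  set x0 : EuclideanSpace ℝ (Fin 2) := (show EuclideanSpace ℝ (Fin 2) from !₂[w / k, 0])
  set y0 : EuclideanSpace ℝ (Fin 2) := (show EuclideanSpace ℝ (Fin 2) from !₂[w, c])
  have hx0A : x0 ∈ A := by
    rw [hA]
    refine ⟨rfl, ?_⟩
    constructor
    · exact div_nonneg hw.le hkpos.le
    · exact le_refl _
  have hy0B : y0 ∈ B := by
    rw [hB]
    refine ⟨rfl, le_refl _, ?_⟩
    show c ≤ w
    rw [hc, div_le_iff₀ hkpos]
    nlinarith
  have hnorm_eq : ∀ x y : EuclideanSpace ℝ (Fin 2),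
      ‖x - y‖ = Real.sqrt ((x 0 - y 0) ^ 2 + (x 1 - y 1) ^ 2) := by
    intro x y
    rw [EuclideanSpace.norm_eq, Fin.sum_univ_two]
    simp [Real.norm_eq_abs, sq_abs]
  have hval : ‖x0 - y0‖ = Real.sqrt 2 * c := by
    rw [hnorm_eq]
    have h0 : x0 0 = w / k := rfl
    have h1 : x0 1 = 0 := rfl
    have h2 : y0 0 = w := rfl
    have h3 : y0 1 = c := rfl
    rw [h0, h1, h2, h3]
    have : (w / k - w) ^ 2 + (0 - c) ^ 2 = 2 * c ^ 2 := by
      have : w / k - w = -c := by linarith [hcw]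
      rw [this]; ring
    rw [this, show (2 : ℝ) * c ^ 2 = (Real.sqrt 2 * c) ^ 2 by
      rw [mul_pow, Real.sq_sqrt (by norm_num : (2:ℝ) ≥ 0)],
      Real.sqrt_sq (mul_nonneg (Real.sqrt_nonneg 2) hc0)]
  have hlb : ∀ d ∈ {d : ℝ | ∃ x ∈ A, ∃ y ∈ B, d = ‖x - y‖}, Real.sqrt 2 * c ≤ d := by
    rintro d ⟨x, hx, y, hy, rfl⟩
    rw [hA] at hx; rw [hB] at hy
    obtain ⟨hx1, hx00, hx01⟩ := hx
    obtain ⟨hy0, hy10, hy11⟩ := hy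
    rw [hnorm_eq, hx1, hy0]
    have key : 2 * c ^ 2 ≤ (x 0 - w) ^ 2 + (0 - y 1) ^ 2 := by
      have h1 : c ≤ w - x 0 := by linarith [hcw]
      have h2 : c ≤ y 1 := hy10
      nlinarith
    calc Real.sqrt 2 * c = Real.sqrt (2 * c ^ 2) := by
          rw [Real.sqrt_mul (by norm_num) , Real.sqrt_sq hc0]
      _ ≤ _ := Real.sqrt_le_sqrt key
  have hne : {d : ℝ | ∃ x ∈ A, ∃ y ∈ B, d = ‖x - y‖}.Nonempty :=
    ⟨‖x0 - y0‖, x0, hx0A, y0, hy0B, rfl⟩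
  have hbdd : BddBelow {d : ℝ | ∃ x ∈ A, ∃ y ∈ B, d = ‖x - y‖} := ⟨Real.sqrt 2 * c, hlb⟩
  have hinf : sInf {d : ℝ | ∃ x ∈ A, ∃ y ∈ B, d = ‖x - y‖} = Real.sqrt 2 * c := by
    apply le_antisymm
    · calc sInf _ ≤ ‖x0 - y0‖ := csInf_le hbdd ⟨x0, hx0A, y0, hy0B, rfl⟩
        _ = Real.sqrt 2 * c := hval
    · exact le_csInf hne hlb
  refine ⟨hinf, ?_⟩
  rw [hinf]
  have hs2 : Real.sqrt 2 ≠ 0 := by positivity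
  rw [hc]
  field_simp
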